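/- (Singular values under SVD-based decomposition) Let A = U_A S V_Aᵀ ∈ ℝ^{n×n} be an SVD and A_k = U_A S_k V_Aᵀ with (S_k)_{mm} = λ_m(A) if m = k and 0 otherwise. For arbitrary W_k ∈ ℝ^{d×d}, the singular values of Σ_{k=1}^n W_k ⊗ A_k are exactly λ_k(A)·λ_j(W_k) for k = 1,...,n and j = 1,...,d. -/

import Mathlib

open Matrix
open scoped Kronecker

/-- Singular values of a real square matrix: square roots of the eigenvalues of `Mᵀ M`. -/
noncomputable def singularValues {m : Type*} [Fintype m] [DecidableEq m]
    (M : Matrix m m ℝ) : m → ℝ :=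
  fun i => Real.sqrt ((show (Mᵀ * M).IsHermitian by
    rw [← Matrix.conjTranspose_eq_transpose_of_trivial]
    exact Matrix.isHermitian_conjTranspose_mul_self M).eigenvalues i)

/-- The `k`-th rank-one SVD component `A_k = U S_k Vᵀ`, where `S_k` keeps only the `k`-th
singular value of `S = diag σ`. -/
noncomputable def svdPart {n : ℕ} (U V : Matrix (Fin n) (Fin n) ℝ) (σ : Fin n → ℝ)
    (k : Fin n) : Matrix (Fin n) (Fin n) ℝ :=
  U * Matrix.diagonal (fun m => if m = k then σ k else 0) * Vᵀ

section Aux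

open Polynomial

variable {m : Type*} [Fintype m] [DecidableEq m]

/-- Characteristic polynomial is invariant under conjugation by invertible matrices. -/
lemma charpoly_conj_orth (P Q B : Matrix m m ℝ) (h1 : P * Q = 1) (h2 : Q * P = 1) :
    (P * B * Q).charpoly = B.charpoly := by
  have hc : charmatrix (P * B * Q) = P.map C * charmatrix B * Q.map C := by
    unfold charmatrix
    rw [Matrix.mul_sub, Matrix.sub_mul]
    congr 1
    · have hcomm : P.map C * Matrix.scalar m (X : ℝ[X]) = Matrix.scalar m (X : ℝ[X]) * P.map C :=
        (Matrix.scalar_commute (X : ℝ[X]) (fun r => Commute.all _ r) (P.map C)).symm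
      rw [hcomm, Matrix.mul_assoc, ← Matrix.map_mul, h1, Matrix.map_one _ (map_zero C) (map_one C),
        Matrix.mul_one]
    · simp only [RingHom.mapMatrix_apply, Matrix.map_mul]
  have h3 : (P.map C).det * (Q.map C).det = 1 := by
    rw [← det_mul, ← Matrix.map_mul, h1, Matrix.map_one _ (map_zero C) (map_one C), det_one]
  rw [Matrix.charpoly, Matrix.charpoly, hc]
  calc (P.map C * charmatrix B * Q.map C).det
      = (P.map C).det * (Q.map C).det * (charmatrix B).det := by rw [det_mul, det_mul]; ring
    _ = (charmatrix B).det := by rw [h3, one_mul]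

lemma charpoly_diagonal_real (g : m → ℝ) :
    (Matrix.diagonal g).charpoly = ∏ i, (X - C (g i)) := by
  have : charmatrix (Matrix.diagonal g) = Matrix.diagonal fun i => X - C (g i) := by
    unfold charmatrix
    rw [RingHom.mapMatrix_apply, Matrix.diagonal_map (map_zero C), Matrix.scalar_apply,
      Matrix.diagonal_sub]
  rw [Matrix.charpoly, this, det_diagonal]

/-- Real spectral theorem phrased with transposes. -/
lemma isHermitian_spectral_real {A : Matrix m m ℝ} (hA : A.IsHermitian) :
    ∃ P : Matrix m m ℝ, P * Pᵀ = 1 ∧ Pᵀ * P = 1 ∧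
      A = P * Matrix.diagonal hA.eigenvalues * Pᵀ := by
  refine ⟨(hA.eigenvectorUnitary : Matrix m m ℝ), ?_, ?_, ?_⟩
  · have := ((Unitary.mem_iff).mp hA.eigenvectorUnitary.2).2
    simpa [star_eq_conjTranspose, conjTranspose_eq_transpose_of_trivial] using this
  · have := ((Unitary.mem_iff).mp hA.eigenvectorUnitary.2).1
    simpa [star_eq_conjTranspose, conjTranspose_eq_transpose_of_trivial] using this
  · have := hA.spectral_theorem
    simpa [star_eq_conjTranspose, conjTranspose_eq_transpose_of_trivial] using this

lemma exists_perm_fin {N : ℕ} (f g : Fin N → ℝ)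
    (h : ∏ i, (X - C (f i)) = ∏ i, (X - C (g i))) :
    ∃ e : Equiv.Perm (Fin N), ∀ i, f (e i) = g i := by
  have hroots : ∀ u : Fin N → ℝ,
      (∏ i, (X - C (u i))).roots = ↑(List.ofFn u) := by
    intro u
    have : ∏ i, (X - C (u i))
        = (Multiset.map (fun a => X - C a) ↑(List.ofFn u)).prod := by
      rw [Multiset.map_coe, List.map_ofFn, Multiset.prod_coe, List.prod_ofFn]
      simp [Function.comp]
    rw [this, roots_multiset_prod_X_sub_C]
  have hperm : (List.ofFn f).Perm (List.ofFn g) := by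
    rw [← Multiset.coe_eq_coe, ← hroots f, ← hroots g, h]
  have hsorted : f ∘ Tuple.sort f = g ∘ Tuple.sort g := by
    apply List.ofFn_injective
    refine List.Perm.eq_of_sortedLE (Tuple.monotone_sort f).sortedLE_ofFn
      (Tuple.monotone_sort g).sortedLE_ofFn ?_
    exact (((Tuple.sort f).ofFn_comp_perm f).trans hperm).trans
      ((Tuple.sort g).ofFn_comp_perm g).symm
  refine ⟨(Tuple.sort g).symm.trans (Tuple.sort f), fun i => ?_⟩
  have := congrFun hsorted ((Tuple.sort g).symm i)
  simpa using this

lemma exists_equiv_eigen {A : Matrix m m ℝ} (hA : A.IsHermitian)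
    (R : Matrix m m ℝ) (h1 : R * Rᵀ = 1) (h2 : Rᵀ * R = 1) (f : m → ℝ)
    (h : A = R * Matrix.diagonal f * Rᵀ) :
    ∃ e : m ≃ m, ∀ i, hA.eigenvalues (e i) = f i := by
  obtain ⟨P, hP1, hP2, hPA⟩ := isHermitian_spectral_real hA
  have hchar : ∏ i, (X - C (hA.eigenvalues i)) = ∏ i, (X - C (f i)) := by
    have e1 : A.charpoly = (Matrix.diagonal hA.eigenvalues).charpoly := by
      conv_lhs => rw [hPA]
      exact charpoly_conj_orth P Pᵀ _ hP1 hP2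
    have e2 : A.charpoly = (Matrix.diagonal f).charpoly := by
      conv_lhs => rw [h]
      exact charpoly_conj_orth R Rᵀ _ h1 h2
    calc ∏ i, (X - C (hA.eigenvalues i))
        = (Matrix.diagonal hA.eigenvalues).charpoly := (charpoly_diagonal_real _).symm
      _ = A.charpoly := e1.symm
      _ = (Matrix.diagonal f).charpoly := e2
      _ = ∏ i, (X - C (f i)) := charpoly_diagonal_real _
  let φ := Fintype.equivFin m
  obtain ⟨e, he⟩ := exists_perm_fin (fun j => hA.eigenvalues (φ.symm j)) (fun j => f (φ.symm j)) (by
    calc (∏ j, (X - C (hA.eigenvalues (φ.symm j))))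
        = ∏ i, (X - C (hA.eigenvalues i)) :=
          Equiv.prod_comp φ.symm (fun i => (X - C (hA.eigenvalues i)))
      _ = ∏ i, (X - C (f i)) := hchar
      _ = ∏ j, (X - C (f (φ.symm j))) :=
          (Equiv.prod_comp φ.symm (fun i => (X - C (f i)))).symm)
  refine ⟨φ.trans (e.trans φ.symm), fun i => ?_⟩
  simpa using he (φ i)

lemma sum_sum_collapse {ι : Type*} [Fintype ι] [DecidableEq ι] {M : Type*} [AddCommMonoid M]
    (F : ι → ι → M) (G : ι → M) (hdiag : ∀ k, F k k = G k)
    (h : ∀ k l, k ≠ l → F k l = 0) :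
    (∑ k, ∑ l, F k l) = ∑ k, G k :=
  Finset.sum_congr rfl fun k _ =>
    (Finset.sum_eq_single k (fun l _ hlk => h k l (Ne.symm hlk))
      (fun hk => absurd (Finset.mem_univ k) hk)).trans (hdiag k)

end Aux

/-- (Singular values under the SVD-based decomposition) For `A = U (diag σ) Vᵀ` an SVD and
`A_k = U S_k Vᵀ`, the singular values of `Σ_k W_k ⊗ A_k` are exactly the products
`λ_k(A) · λ_j(W_k)`, counted with multiplicity. -/
theorem singularValues_sum_kronecker_svdPart {n d : ℕ}
    (U V : Matrix (Fin n) (Fin n) ℝ)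
    (hU : Uᵀ * U = 1 ∧ U * Uᵀ = 1) (hV : Vᵀ * V = 1 ∧ V * Vᵀ = 1)
    (σ : Fin n → ℝ) (hσ : ∀ k, 0 ≤ σ k)
    (W : Fin n → Matrix (Fin d) (Fin d) ℝ) :
    ∃ e : (Fin d × Fin n) ≃ (Fin d × Fin n),
      ∀ p : Fin d × Fin n,
        singularValues (∑ k, (W k) ⊗ₖ svdPart U V σ k) (e p) =
          σ p.2 * singularValues (W p.2) p.1 := by
  classical
  set M : Matrix (Fin d × Fin n) (Fin d × Fin n) ℝ := ∑ k, (W k) ⊗ₖ svdPart U V σ k with hM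
  set μ : Fin n → Fin d → ℝ :=
    fun k => (show ((W k)ᵀ * W k).IsHermitian by
      rw [← Matrix.conjTranspose_eq_transpose_of_trivial]
      exact Matrix.isHermitian_conjTranspose_mul_self (W k)).eigenvalues with hμ
  -- spectral decomposition of each `(W k)ᵀ * W k`
  have hspec : ∀ k, ∃ P : Matrix (Fin d) (Fin d) ℝ, P * Pᵀ = 1 ∧ Pᵀ * P = 1 ∧
      (W k)ᴴ * (W k) = P * Matrix.diagonal (μ k) * Pᵀ :=
    fun k => isHermitian_spectral_real _
  choose Q hQ1 hQ2 hQ3 using hspec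
  have hQ3' : ∀ k, (W k)ᵀ * W k = Q k * Matrix.diagonal (μ k) * (Q k)ᵀ := fun k => by
    rw [← conjTranspose_eq_transpose_of_trivial]; exact hQ3 k
  have hU1 : ∀ X : Matrix (Fin n) (Fin n) ℝ, Uᵀ * (U * X) = X := fun X => by
    rw [← Matrix.mul_assoc, hU.1, Matrix.one_mul]
  have hV1 : ∀ X : Matrix (Fin n) (Fin n) ℝ, Vᵀ * (V * X) = X := fun X => by
    rw [← Matrix.mul_assoc, hV.1, Matrix.one_mul]
  -- the diagonal 0-1 "mask" matrices
  set E : Fin n → Matrix (Fin n) (Fin n) ℝ :=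
    fun k => Matrix.diagonal (fun m => if m = k then (1:ℝ) else 0) with hE
  have hEE : ∀ k l, E k * E l = if k = l then E k else 0 := by
    intro k l
    simp only [hE, Matrix.diagonal_mul_diagonal]
    split_ifs with hkl
    · subst hkl
      refine congrArg Matrix.diagonal (funext fun p => ?_)
      by_cases hp : p = k <;> simp [hp]
    · rw [← Matrix.diagonal_zero]
      refine congrArg Matrix.diagonal (funext fun p => ?_)
      by_cases hpk : p = k <;> by_cases hpl : p = l <;> simp_all
  have hEt : ∀ k, (E k)ᵀ = E k := fun k => by
    simp only [hE]; exact Matrix.diagonal_transpose _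
  have hEsum : (∑ l, E l) = 1 := by
    ext i j
    by_cases hij : i = j
    · subst hij; simp [hE, Matrix.sum_apply, Matrix.diagonal_apply]
    · simp [hE, Matrix.sum_apply, Matrix.diagonal_apply, hij, Matrix.one_apply]
  -- kronecker distributes over sums in the second argument
  have kron_sum : ∀ {a b : ℕ} (A : Matrix (Fin a) (Fin a) ℝ)
      (B : Fin n → Matrix (Fin b) (Fin b) ℝ),
      A ⊗ₖ (∑ l, B l) = ∑ l, A ⊗ₖ B l := by
    intro a b A B
    ext p q
    simp [Matrix.sum_apply, Finset.mul_sum]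
  -- product of sums of Kronecker products
  have prodsum : ∀ {a b : ℕ} (A B : Fin n → Matrix (Fin a) (Fin a) ℝ)
      (A' B' : Fin n → Matrix (Fin b) (Fin b) ℝ),
      (∑ k, A k ⊗ₖ A' k) * (∑ l, B l ⊗ₖ B' l)
        = ∑ k, ∑ l, (A k * B l) ⊗ₖ (A' k * B' l) := by
    intro a b A B A' B'
    rw [Finset.sum_mul_sum]
    exact Finset.sum_congr rfl fun k _ => Finset.sum_congr rfl fun l _ =>
      (Matrix.mul_kronecker_mul _ _ _ _).symm
  -- the orthogonal matrix `R`
  set R : Matrix (Fin d × Fin n) (Fin d × Fin n) ℝ := ∑ l, (Q l) ⊗ₖ (V * E l) with hR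
  have hRt : Rᵀ = ∑ l, (Q l)ᵀ ⊗ₖ (E l * Vᵀ) := by
    rw [hR, Matrix.transpose_sum]
    refine Finset.sum_congr rfl fun l _ => ?_
    rw [← Matrix.kroneckerMap_transpose, Matrix.transpose_mul, hEt]
  have hRRt : R * Rᵀ = 1 := by
    rw [hR, hRt, prodsum]
    have e2 : ∀ k l, (Q k * (Q l)ᵀ) ⊗ₖ ((V * E k) * (E l * Vᵀ))
        = if k = l then (1 : Matrix (Fin d) (Fin d) ℝ) ⊗ₖ (V * E k * Vᵀ) else 0 := by
      intro k l
      have hmid : (V * E k) * (E l * Vᵀ) = if k = l then V * E k * Vᵀ else 0 := by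
        have h1 : (V * E k) * (E l * Vᵀ) = V * (E k * E l) * Vᵀ := by
          simp only [Matrix.mul_assoc]
        rw [h1, hEE]
        split_ifs with hkl
        · rfl
        · simp
      rw [hmid]
      split_ifs with hkl
      · subst hkl; rw [hQ1]
      · exact Matrix.kronecker_zero _
    rw [Finset.sum_congr rfl fun k _ => Finset.sum_congr rfl fun l _ => e2 k l,
      sum_sum_collapse
        (fun k l => if k = l then (1 : Matrix (Fin d) (Fin d) ℝ) ⊗ₖ (V * E k * Vᵀ) else 0)
        (fun k => (1 : Matrix (Fin d) (Fin d) ℝ) ⊗ₖ (V * E k * Vᵀ))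
        (fun k => if_pos rfl) (fun k l hkl => if_neg hkl),
      ← kron_sum 1 (fun l => V * E l * Vᵀ)]
    have e3 : (∑ l, V * E l * Vᵀ) = V * (∑ l, E l) * Vᵀ := by
      rw [Finset.mul_sum, Finset.sum_mul]
    rw [e3, hEsum, Matrix.mul_one, hV.2, Matrix.one_kronecker_one]
  have hRtR : Rᵀ * R = 1 := by
    rw [hR, hRt, prodsum]
    have e2 : ∀ k l, ((Q k)ᵀ * Q l) ⊗ₖ ((E k * Vᵀ) * (V * E l))
        = if k = l then (1 : Matrix (Fin d) (Fin d) ℝ) ⊗ₖ E k else 0 := by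
      intro k l
      have hmid : (E k * Vᵀ) * (V * E l) = if k = l then E k else 0 := by
        have h1 : (E k * Vᵀ) * (V * E l) = E k * E l := by
          simp only [Matrix.mul_assoc, hV1]
        rw [h1, hEE]
      rw [hmid]
      split_ifs with hkl
      · subst hkl; rw [hQ2]
      · exact Matrix.kronecker_zero _
    rw [Finset.sum_congr rfl fun k _ => Finset.sum_congr rfl fun l _ => e2 k l,
      sum_sum_collapse
        (fun k l => if k = l then (1 : Matrix (Fin d) (Fin d) ℝ) ⊗ₖ E k else 0)
        (fun k => (1 : Matrix (Fin d) (Fin d) ℝ) ⊗ₖ E k)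
        (fun k => if_pos rfl) (fun k l hkl => if_neg hkl),
      ← kron_sum 1 E, hEsum, Matrix.one_kronecker_one]
  -- the target eigenvalue function
  set f : Fin d × Fin n → ℝ := fun p => σ p.2 ^ 2 * μ p.2 p.1 with hf
  -- the diagonal matrix decomposes along the masks
  have hdiagf : Matrix.diagonal f = ∑ l, ((σ l ^ 2) • Matrix.diagonal (μ l)) ⊗ₖ E l := by
    ext ⟨j, s⟩ ⟨j', s'⟩
    simp only [Matrix.sum_apply, Matrix.kroneckerMap_apply, Matrix.smul_apply,
      Matrix.diagonal_apply, hE, hf, smul_eq_mul, Prod.mk.injEq]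
    by_cases hj : j = j' <;> by_cases hs : s = s' <;>
      simp [hj, hs, mul_ite, Finset.sum_ite_eq]
  -- the rank-one diagonal factors
  set D : Fin n → Matrix (Fin n) (Fin n) ℝ :=
    fun k => Matrix.diagonal (fun m => if m = k then σ k else 0) with hD
  have hDD : ∀ k l, D k * D l = if k = l then (σ k ^ 2) • E k else 0 := by
    intro k l
    simp only [hD, Matrix.diagonal_mul_diagonal]
    split_ifs with hkl
    · subst hkl
      simp only [hE]
      rw [← Matrix.diagonal_smul]
      refine congrArg Matrix.diagonal (funext fun p => ?_)
      by_cases hp : p = k <;> simp [hp, pow_two]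
    · rw [← Matrix.diagonal_zero]
      refine congrArg Matrix.diagonal (funext fun p => ?_)
      by_cases hpk : p = k <;> by_cases hpl : p = l <;> simp_all
  have hDt : ∀ k, (D k)ᵀ = D k := fun k => by
    simp only [hD]; exact Matrix.diagonal_transpose _
  have hsvd : ∀ k, svdPart U V σ k = U * D k * Vᵀ := fun k => by
    simp only [hD]; rfl
  have hM' : M = ∑ k, (W k) ⊗ₖ (U * D k * Vᵀ) := by
    rw [hM]
    exact Finset.sum_congr rfl fun k _ => by rw [hsvd k]
  have hMt : Mᵀ = ∑ k, (W k)ᵀ ⊗ₖ (V * (D k * Uᵀ)) := by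
    rw [hM', Matrix.transpose_sum]
    refine Finset.sum_congr rfl fun k _ => ?_
    rw [← Matrix.kroneckerMap_transpose, Matrix.transpose_mul, Matrix.transpose_mul,
      Matrix.transpose_transpose, hDt]
  -- compute `Mᵀ * M`
  have hMMt : Mᵀ * M = ∑ k, (σ k ^ 2) • (((W k)ᵀ * W k) ⊗ₖ (V * E k * Vᵀ)) := by
    rw [hMt, hM', prodsum]
    have e2 : ∀ k l, ((W k)ᵀ * W l) ⊗ₖ ((V * (D k * Uᵀ)) * (U * D l * Vᵀ))
        = if k = l then (σ k ^ 2) • (((W k)ᵀ * W k) ⊗ₖ (V * E k * Vᵀ)) else 0 := by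
      intro k l
      have hmid : (V * (D k * Uᵀ)) * (U * D l * Vᵀ)
          = if k = l then (σ k ^ 2) • (V * E k * Vᵀ) else 0 := by
        have h1 : (V * (D k * Uᵀ)) * (U * D l * Vᵀ) = V * (D k * D l) * Vᵀ := by
          simp only [Matrix.mul_assoc, hU1]
        rw [h1, hDD]
        split_ifs with hkl
        · rw [Matrix.mul_smul, Matrix.smul_mul]
        · simp
      rw [hmid]
      split_ifs with hkl
      · subst hkl; rw [Matrix.kronecker_smul]
      · exact Matrix.kronecker_zero _
    rw [Finset.sum_congr rfl fun k _ => Finset.sum_congr rfl fun l _ => e2 k l,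
      sum_sum_collapse
        (fun k l => if k = l then (σ k ^ 2) • (((W k)ᵀ * W k) ⊗ₖ (V * E k * Vᵀ)) else 0)
        (fun k => (σ k ^ 2) • (((W k)ᵀ * W k) ⊗ₖ (V * E k * Vᵀ)))
        (fun k => if_pos rfl) (fun k l hkl => if_neg hkl)]
  -- compute `R * diagonal f * Rᵀ`
  have hS1 : R * Matrix.diagonal f
      = ∑ k, (Q k * ((σ k ^ 2) • Matrix.diagonal (μ k))) ⊗ₖ (V * E k) := by
    rw [hR, hdiagf, prodsum]
    have e2 : ∀ k l, (Q k * ((σ l ^ 2) • Matrix.diagonal (μ l))) ⊗ₖ ((V * E k) * E l)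
        = if k = l then (Q k * ((σ k ^ 2) • Matrix.diagonal (μ k))) ⊗ₖ (V * E k) else 0 := by
      intro k l
      have hmid : (V * E k) * E l = if k = l then V * E k else 0 := by
        rw [Matrix.mul_assoc, hEE]
        split_ifs with hkl
        · rfl
        · simp
      rw [hmid]
      split_ifs with hkl
      · subst hkl; rfl
      · exact Matrix.kronecker_zero _
    rw [Finset.sum_congr rfl fun k _ => Finset.sum_congr rfl fun l _ => e2 k l,
      sum_sum_collapse
        (fun k l => if k = l then (Q k * ((σ k ^ 2) • Matrix.diagonal (μ k))) ⊗ₖ (V * E k) else 0)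
        (fun k => (Q k * ((σ k ^ 2) • Matrix.diagonal (μ k))) ⊗ₖ (V * E k))
        (fun k => if_pos rfl) (fun k l hkl => if_neg hkl)]
  have hRfRt : R * Matrix.diagonal f * Rᵀ
      = ∑ k, (σ k ^ 2) • (((W k)ᵀ * W k) ⊗ₖ (V * E k * Vᵀ)) := by
    rw [hS1, hRt, prodsum]
    have e2 : ∀ k l, ((Q k * ((σ k ^ 2) • Matrix.diagonal (μ k))) * (Q l)ᵀ)
          ⊗ₖ ((V * E k) * (E l * Vᵀ))
        = if k = l then (σ k ^ 2) • (((W k)ᵀ * W k) ⊗ₖ (V * E k * Vᵀ)) else 0 := by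
      intro k l
      have hmid : (V * E k) * (E l * Vᵀ) = if k = l then V * E k * Vᵀ else 0 := by
        have h1 : (V * E k) * (E l * Vᵀ) = V * (E k * E l) * Vᵀ := by
          simp only [Matrix.mul_assoc]
        rw [h1, hEE]
        split_ifs with hkl
        · rfl
        · simp
      rw [hmid]
      split_ifs with hkl
      · subst hkl
        have h2 : (Q k * ((σ k ^ 2) • Matrix.diagonal (μ k))) * (Q k)ᵀ
            = (σ k ^ 2) • ((W k)ᵀ * W k) := by
          rw [Matrix.mul_smul, Matrix.smul_mul, hQ3' k]
        rw [h2, Matrix.smul_kronecker]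
      · exact Matrix.kronecker_zero _
    rw [Finset.sum_congr rfl fun k _ => Finset.sum_congr rfl fun l _ => e2 k l,
      sum_sum_collapse
        (fun k l => if k = l then (σ k ^ 2) • (((W k)ᵀ * W k) ⊗ₖ (V * E k * Vᵀ)) else 0)
        (fun k => (σ k ^ 2) • (((W k)ᵀ * W k) ⊗ₖ (V * E k * Vᵀ)))
        (fun k => if_pos rfl) (fun k l hkl => if_neg hkl)]
  have hMM : Mᴴ * M = R * Matrix.diagonal f * Rᵀ := by
    rw [conjTranspose_eq_transpose_of_trivial, hMMt, hRfRt]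
  obtain ⟨e, he⟩ :=
    exists_equiv_eigen (show (Mᵀ * M).IsHermitian by
      rw [← Matrix.conjTranspose_eq_transpose_of_trivial]
      exact Matrix.isHermitian_conjTranspose_mul_self M) R hRRt hRtR f hMM
  refine ⟨e, fun p => ?_⟩
  simp only [singularValues]
  rw [show (show (Mᵀ * M).IsHermitian by
      rw [← Matrix.conjTranspose_eq_transpose_of_trivial]
      exact Matrix.isHermitian_conjTranspose_mul_self M).eigenvalues (e p) = f p from he p, hf]
  rw [Real.sqrt_mul (sq_nonneg (σ p.2)), Real.sqrt_sq (hσ p.2)]
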